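/- Refined lower tail fluctuation bound for heavy tails: fix an integer d ≥ 3 and α ∈ (0,2]. Then for every constant τ with max{0, 1−α} < τ < 1, the probability P( λ₁(X) ≤ (log n)^{1/α} − (log n)^{τ/α} ) tends to 0 as n → ∞ (along integers n > d with nd even). -/

import Mathlib

open MeasureTheory ProbabilityTheory Filter Real
open scoped ENNReal NNReal

noncomputable section

instance matrixMeasurableSpace {m n α : Type*} [MeasurableSpace α] :
    MeasurableSpace (Matrix m n α) :=
  inferInstanceAs (MeasurableSpace (m → n → α))

/-- The largest eigenvalue of a real square matrix: the supremum of its real eigenvalues. -/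
def lam1 {n : ℕ} (M : Matrix (Fin n) (Fin n) ℝ) : ℝ :=
  sSup {r : ℝ | ∃ v : Fin n → ℝ, v ≠ 0 ∧ M.mulVec v = r • v}

/-- The set of adjacency matrices of simple `d`-regular graphs on `n` vertices:
symmetric 0-1 matrices with zero diagonal and all row sums equal to `d`. -/
def RegAdj (n d : ℕ) : Set (Matrix (Fin n) (Fin n) ℝ) :=
  {M | M.IsSymm ∧ (∀ i, M i i = 0) ∧ (∀ i j, M i j = 0 ∨ M i j = 1) ∧
    ∀ i, (∑ j, M i j) = (d : ℝ)}

/-- A Weibull distribution with shape parameter `α` and constants `C₁ C₂`. -/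
def IsWeibull (α C₁ C₂ : ℝ) (μ : Measure ℝ) : Prop :=
  IsProbabilityMeasure μ ∧
  ∀ t : ℝ, 1 ≤ t →
    ENNReal.ofReal (C₁ * Real.exp (-t ^ α) / 2) ≤ μ {x | t ≤ x} ∧
    μ {x | t ≤ x} ≤ ENNReal.ofReal (C₂ * Real.exp (-t ^ α) / 2) ∧
    ENNReal.ofReal (C₁ * Real.exp (-t ^ α) / 2) ≤ μ {x | x ≤ -t} ∧
    μ {x | x ≤ -t} ≤ ENNReal.ofReal (C₂ * Real.exp (-t ^ α) / 2)

/-- The weighted random `d`-regular graph model: `A` is uniformly distributed on the set of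
adjacency matrices of simple `d`-regular graphs on `n` vertices, `W` is a symmetric random
matrix with zero diagonal whose upper-triangular entries are i.i.d. with common law `μ`
(a Weibull law with shape parameter `α` and constants `C₁ C₂`), and `W` is independent
of `A`. -/
def WRRGModel (d : ℕ) (α C₁ C₂ : ℝ) {n : ℕ} {Ω : Type*} [MeasurableSpace Ω]
    (P : Measure Ω) (A W : Ω → Matrix (Fin n) (Fin n) ℝ) (μ : Measure ℝ) : Prop :=
  IsProbabilityMeasure P ∧ Measurable A ∧ Measurable W ∧
  (∀ ω, A ω ∈ RegAdj n d) ∧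
  (∀ M ∈ RegAdj n d, P {ω | A ω = M} = ((RegAdj n d).ncard : ℝ≥0∞)⁻¹) ∧
  (∀ ω, (W ω).IsSymm) ∧ (∀ ω i, W ω i i = 0) ∧
  IsWeibull α C₁ C₂ μ ∧
  (∀ i j : Fin n, i < j → Measure.map (fun ω => W ω i j) P = μ) ∧
  iIndepFun
    (fun (p : {p : Fin n × Fin n // p.1 < p.2}) (ω : Ω) => W ω p.1.1 p.1.2) P ∧
  IndepFun A W P

open scoped RealInnerProductSpace

lemma entry_le_lam1 {n : ℕ} (X : Matrix (Fin n) (Fin n) ℝ) (hX : X.IsSymm)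
    (hXd : ∀ k, X k k = 0) {i j : Fin n} (hij : i ≠ j) :
    X i j ≤ lam1 X := by
  have hherm : X.IsHermitian := by
    rw [Matrix.IsHermitian, Matrix.conjTranspose]
    ext a b; simp [hX.apply a b]
  haveI : Nonempty (Fin n) := ⟨i⟩
  haveI : Nontrivial (EuclideanSpace ℝ (Fin n)) := inferInstance
  set T : EuclideanSpace ℝ (Fin n) →ₗ[ℝ] EuclideanSpace ℝ (Fin n) :=
    Matrix.toEuclideanLin X with hT_def
  have hT : T.IsSymmetric := (Matrix.isHermitian_iff_isSymmetric).1 hherm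
  set r : ℝ := ⨆ x : { x : EuclideanSpace ℝ (Fin n) // x ≠ 0 },
      RCLike.re ⟪T x, x⟫ / ‖(x : EuclideanSpace ℝ (Fin n))‖ ^ 2 with hr_def
  have hev := hT.hasEigenvalue_iSup_of_finiteDimensional
  have hne : Module.End.eigenspace T r ≠ ⊥ := by
    have := Module.End.hasEigenvalue_iff.mp hev
    simpa [RCLike.ofReal_real_eq_id, hr_def] using this
  obtain ⟨v, hv_mem, hv0⟩ := Submodule.exists_mem_ne_zero_of_ne_bot hne
  have hv : T v = r • v := Module.End.mem_eigenspace_iff.1 hv_mem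
  -- translate to mulVec
  have hmem : r ∈ {s : ℝ | ∃ w : Fin n → ℝ, w ≠ 0 ∧ X.mulVec w = s • w} := by
    refine ⟨(WithLp.equiv 2 _) v, ?_, ?_⟩
    · simpa using hv0
    · have := congrArg (WithLp.equiv 2 (Fin n → ℝ)) hv
      simpa [Matrix.toLin'_apply, hT_def, Matrix.toEuclideanLin_apply] using this
  -- bounded above
  have hbdd : BddAbove {s : ℝ | ∃ w : Fin n → ℝ, w ≠ 0 ∧ X.mulVec w = s • w} := by
    refine ⟨‖Matrix.toEuclideanCLM (𝕜 := ℝ) X‖, ?_⟩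
    rintro s ⟨w, hw0, hw⟩
    set w' : EuclideanSpace ℝ (Fin n) := (WithLp.equiv 2 _).symm w with hw'_def
    have hw'0 : w' ≠ 0 := by simpa [hw'_def] using hw0
    have happ : (Matrix.toEuclideanCLM (𝕜 := ℝ) X) w' = s • w' := by
      show (WithLp.equiv 2 (Fin n → ℝ)).symm (Matrix.toLin' X w) = s • w'
      have := congrArg (WithLp.equiv 2 (Fin n → ℝ)).symm hw
      simpa [Matrix.toLin'_apply, hw'_def] using this
    have h1 : |s| * ‖w'‖ ≤ ‖Matrix.toEuclideanCLM (𝕜 := ℝ) X‖ * ‖w'‖ := by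
      calc |s| * ‖w'‖ = ‖s • w'‖ := by rw [norm_smul]; simp [Real.norm_eq_abs]
        _ = ‖(Matrix.toEuclideanCLM (𝕜 := ℝ) X) w'‖ := by rw [happ]
        _ ≤ ‖Matrix.toEuclideanCLM (𝕜 := ℝ) X‖ * ‖w'‖ :=
            (Matrix.toEuclideanCLM (𝕜 := ℝ) X).le_opNorm w'
    have hnw : 0 < ‖w'‖ := norm_pos_iff.2 hw'0
    have := le_of_mul_le_mul_right h1 hnw
    exact le_trans (le_abs_self s) this
  have hr_le : r ≤ lam1 X := le_csSup hbdd hmem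
  refine le_trans ?_ hr_le
  -- Rayleigh at x₀
  set x₀ : EuclideanSpace ℝ (Fin n) :=
    EuclideanSpace.single i 1 + EuclideanSpace.single j 1 with hx₀_def
  have hx₀0 : x₀ ≠ 0 := by
    intro h
    have : x₀ i = 0 := by rw [h]; rfl
    rw [hx₀_def] at this
    simp [EuclideanSpace.single_apply, hij, Ne.symm hij] at this
  -- coordinates of T x₀
  have hTx : ∀ k, T x₀ k = X k i + X k j := by
    intro k
    show (X.mulVec (WithLp.equiv 2 (Fin n → ℝ) x₀)) k = _
    have : (WithLp.equiv 2 (Fin n → ℝ)) x₀ =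
        (Pi.single i 1 + Pi.single j 1 : Fin n → ℝ) := by
      funext l
      simp [hx₀_def, EuclideanSpace.single_apply, Pi.single_apply]
    rw [this, Matrix.mulVec_add]
    simp [Matrix.mulVec_single]
  have hinner : ⟪T x₀, x₀⟫ = 2 * X i j := by
    rw [hx₀_def]
    rw [inner_add_right]
    rw [EuclideanSpace.inner_single_right, EuclideanSpace.inner_single_right]
    simp only [map_one, one_mul]
    have h1 := hTx i
    have h2 := hTx j
    simp only [starRingEnd_apply, star_trivial]
    rw [show (T x₀) i = X i i + X i j from hTx i, show (T x₀) j = X j i + X j j from hTx j,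
      hXd i, hXd j, hX.apply i j]
    ring
  have hnorm : ‖x₀‖ ^ 2 = 2 := by
    rw [← real_inner_self_eq_norm_sq]
    rw [hx₀_def, inner_add_right, EuclideanSpace.inner_single_right,
      EuclideanSpace.inner_single_right]
    norm_num [EuclideanSpace.single_apply, hij, Ne.symm hij]
  have hval : RCLike.re ⟪T x₀, x₀⟫ / ‖x₀‖ ^ 2 = X i j := by
    rw [hnorm]
    simp only [RCLike.re_to_real] -- real
    rw [hinner]; ring
  have hbdd2 : BddAbove (Set.range fun x : { x : EuclideanSpace ℝ (Fin n) // x ≠ 0 } =>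
      RCLike.re ⟪T x, x⟫ / ‖(x : EuclideanSpace ℝ (Fin n))‖ ^ 2) := by
    refine ⟨‖Matrix.toEuclideanCLM (𝕜 := ℝ) X‖, ?_⟩
    rintro s ⟨⟨x, hx0⟩, rfl⟩
    have hTx' : T x = (Matrix.toEuclideanCLM (𝕜 := ℝ) X) x := rfl
    have h1 : ⟪T x, x⟫ ≤ ‖T x‖ * ‖x‖ := real_inner_le_norm _ _
    have h2 : ‖T x‖ ≤ ‖Matrix.toEuclideanCLM (𝕜 := ℝ) X‖ * ‖x‖ := by
      rw [hTx']; exact (Matrix.toEuclideanCLM (𝕜 := ℝ) X).le_opNorm x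
    have hnx : ‖x‖ ≠ 0 := fun h => hx0 (norm_eq_zero.1 h)
    have hx : 0 < ‖x‖ ^ 2 := by positivity
    show RCLike.re (inner ℝ (T x) x : ℝ) / ‖x‖ ^ 2 ≤ _
    rw [RCLike.re_to_real, div_le_iff₀ hx]
    calc ⟪T x, x⟫ ≤ ‖T x‖ * ‖x‖ := h1
      _ ≤ ‖Matrix.toEuclideanCLM (𝕜 := ℝ) X‖ * ‖x‖ * ‖x‖ := by
          exact mul_le_mul_of_nonneg_right h2 (norm_nonneg x)
      _ = ‖Matrix.toEuclideanCLM (𝕜 := ℝ) X‖ * ‖x‖ ^ 2 := by ring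
  have := le_ciSup hbdd2 (⟨x₀, hx₀0⟩ : { x : EuclideanSpace ℝ (Fin n) // x ≠ 0 })
  rw [hval] at this
  exact this


lemma entry_le_lam1_hadamard {n d : ℕ} {M N : Matrix (Fin n) (Fin n) ℝ}
    (hM : M ∈ RegAdj n d) (hN : N.IsSymm) {i j : Fin n} (hij : i < j)
    (h1 : M i j = 1) : N i j ≤ lam1 (M.hadamard N) := by
  obtain ⟨hMs, hMd, h01, _⟩ := hM
  have hs : (M.hadamard N).IsSymm := by
    refine Matrix.IsSymm.ext fun a b => ?_
    simp only [Matrix.hadamard_apply]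
    rw [hMs.apply a b, hN.apply a b]
  have hdz : ∀ k, (M.hadamard N) k k = 0 := fun k => by
    simp [Matrix.hadamard_apply, hMd k]
  have := entry_le_lam1 (M.hadamard N) hs hdz (i := i) (j := j) (ne_of_lt hij)
  rwa [Matrix.hadamard_apply, h1, one_mul] at this

open scoped Classical in
lemma card_edges {n d : ℕ} {M : Matrix (Fin n) (Fin n) ℝ} (hM : M ∈ RegAdj n d)
    (hd : 1 ≤ d) :
    n ≤ 2 * (Finset.univ.filter
      (fun p : {p : Fin n × Fin n // p.1 < p.2} => M p.1.1 p.1.2 = 1)).card := by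
  obtain ⟨hsym, hdiag, h01, hrow⟩ := hM
  set S := Finset.univ.filter
      (fun p : {p : Fin n × Fin n // p.1 < p.2} => M p.1.1 p.1.2 = 1) with hS
  have hnb : ∀ i : Fin n, ∃ j, M i j = 1 := by
    intro i
    by_contra h
    push_neg at h
    have hz : ∀ j, M i j = 0 := fun j => (h01 i j).resolve_right (h j)
    have := hrow i
    rw [Finset.sum_congr rfl (fun j _ => hz j)] at this
    have hd' : (1:ℝ) ≤ d := by exact_mod_cast hd
    simp at this
    linarith
  choose nb hnb using hnb
  have hne : ∀ i, nb i ≠ i := by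
    intro i h
    have := hnb i
    rw [h, hdiag i] at this
    norm_num at this
  set f : Fin n → {p : Fin n × Fin n // p.1 < p.2} := fun i =>
    if h : i < nb i then ⟨(i, nb i), h⟩ else
      ⟨(nb i, i), (lt_of_le_of_ne (not_lt.1 h) (hne i))⟩ with hf
  have hmaps : ∀ i : Fin n, f i ∈ S := by
    intro i
    simp only [hS, Finset.mem_filter, Finset.mem_univ, true_and]
    by_cases h : i < nb i
    · simp only [f, dif_pos h]; exact hnb i
    · simp only [f, dif_neg h]
      have : M (nb i) i = M i (nb i) := hsym.apply i (nb i)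
      rw [this]; exact hnb i
  have hendpoint : ∀ i : Fin n, i = (f i).1.1 ∨ i = (f i).1.2 := by
    intro i
    by_cases h : i < nb i
    · left; simp [f, dif_pos h]
    · right; simp [f, dif_neg h]
  calc n = (Finset.univ : Finset (Fin n)).card := by simp
    _ ≤ 2 * S.card := by
        refine Finset.card_le_mul_card_image_of_maps_to (fun a _ => hmaps a) 2 ?_
        intro b _
        have hsub : (Finset.univ.filter (fun a : Fin n => f a = b)) ⊆ {b.1.1, b.1.2} := by
          intro a ha
          simp only [Finset.mem_filter, Finset.mem_univ, true_and] at ha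
          rcases hendpoint a with h | h
          · simp [Finset.mem_insert]; left; rw [h, ha]
          · simp [Finset.mem_insert]; right; rw [h, ha]
        calc (Finset.univ.filter (fun a : Fin n => f a = b)).card
            ≤ ({b.1.1, b.1.2} : Finset (Fin n)).card := Finset.card_le_card hsub
          _ ≤ 2 := Finset.card_insert_le _ _ |>.trans (by simp)

lemma rpow_upper_bound {α τ L : ℝ} (hα : 0 < α) (hα2 : α ≤ 2) (hτ : τ < 1) (hL : 1 ≤ L) :
    (L ^ (1/α) - L ^ (τ/α) / 2) ^ α ≤ L - α/4 * L ^ ((α + τ - 1)/α) := by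
  have hLpos : (0:ℝ) < L := by linarith
  set δ := L ^ ((τ-1)/α) with hδ
  have hδpos : 0 < δ := rpow_pos_of_pos hLpos _
  have hδ1 : δ ≤ 1 :=
    Real.rpow_le_one_of_one_le_of_nonpos hL
      (div_nonpos_of_nonpos_of_nonneg (by linarith) hα.le)
  have hsplit : L ^ (τ/α) = L ^ (1/α) * δ := by
    rw [hδ, ← Real.rpow_add hLpos]
    congr 1
    field_simp
    ring
  have hfac : (0:ℝ) < 1 - δ/2 := by linarith
  have hL1α : (0:ℝ) < L ^ (1/α) := rpow_pos_of_pos hLpos _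
  have hbase : L ^ (1/α) - L ^ (τ/α)/2 = L ^ (1/α) * (1 - δ/2) := by
    rw [hsplit]; ring
  have hmul : (L ^ (1/α) * (1 - δ/2)) ^ α = L * (1 - δ/2) ^ α := by
    rw [Real.mul_rpow hL1α.le hfac.le, ← Real.rpow_mul hLpos.le,
      one_div_mul_cancel hα.ne', Real.rpow_one]
  have key : (1 - δ/2) ^ α ≤ 1 - α/4 * δ := by
    set s := α * δ / 2 with hs
    have hs0 : 0 < s := by positivity
    have hs1 : s ≤ 1 := by nlinarith
    have h1 : (1 - δ/2) ^ α = Real.exp (Real.log (1 - δ/2) * α) :=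
      Real.rpow_def_of_pos hfac α
    have h2 : Real.log (1 - δ/2) ≤ -(δ/2) := by
      have := Real.log_le_sub_one_of_pos hfac; linarith
    have h3 : Real.log (1 - δ/2) * α ≤ -s := by
      have := mul_le_mul_of_nonneg_right h2 hα.le
      rw [hs]; nlinarith
    have h4 : Real.exp (Real.log (1 - δ/2) * α) ≤ Real.exp (-s) := Real.exp_le_exp.2 h3
    have h5 : Real.exp (-s) ≤ (1 + s)⁻¹ := by
      rw [Real.exp_neg]
      exact inv_anti₀ (by linarith) (by linarith [Real.add_one_le_exp s])
    have h6 : (1 + s)⁻¹ ≤ 1 - s/2 := by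
      have hmul1 : (1:ℝ) ≤ (1 + s) * (1 - s/2) := by nlinarith
      have hpos : (0:ℝ) < 1 + s := by linarith
      calc (1 + s)⁻¹ = (1 + s)⁻¹ * 1 := by ring
        _ ≤ (1 + s)⁻¹ * ((1 + s) * (1 - s/2)) := by
            exact mul_le_mul_of_nonneg_left hmul1 (by positivity)
        _ = 1 - s/2 := by field_simp
    rw [h1]
    calc Real.exp (Real.log (1 - δ/2) * α) ≤ (1 + s)⁻¹ := h4.trans h5
      _ ≤ 1 - s/2 := h6
      _ = 1 - α/4 * δ := by rw [hs]; ring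
  have hLδ : L * δ = L ^ ((α + τ - 1)/α) := by
    rw [hδ]
    nth_rewrite 1 [show L = L ^ (1:ℝ) from (Real.rpow_one L).symm]
    rw [← Real.rpow_add hLpos]
    congr 1
    field_simp
    ring
  calc (L ^ (1/α) - L ^ (τ/α) / 2) ^ α = L * (1 - δ/2) ^ α := by rw [hbase, hmul]
    _ ≤ L * (1 - α/4 * δ) := mul_le_mul_of_nonneg_left key hLpos.le
    _ = L - α/4 * (L * δ) := by ring
    _ = L - α/4 * L ^ ((α + τ - 1)/α) := by rw [hLδ]

lemma measurable_entry {n : ℕ} (i j : Fin n) :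
    Measurable (fun M : Matrix (Fin n) (Fin n) ℝ => M i j) :=
  (measurable_pi_apply j).comp (measurable_pi_apply i)

lemma measurableSet_RegAdj {n d : ℕ} : MeasurableSet (RegAdj n d) := by
  have h1 : MeasurableSet {M : Matrix (Fin n) (Fin n) ℝ | M.IsSymm} := by
    have : {M : Matrix (Fin n) (Fin n) ℝ | M.IsSymm} =
        ⋂ i, ⋂ j, {M : Matrix (Fin n) (Fin n) ℝ | M j i = M i j} := by
      ext M
      simp only [Set.mem_setOf_eq, Set.mem_iInter]
      constructor
      · intro h i j; exact h.apply i j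
      · intro h; exact Matrix.IsSymm.ext fun i j => h i j
    rw [this]
    exact MeasurableSet.iInter fun i => MeasurableSet.iInter fun j =>
      measurableSet_eq_fun (measurable_entry j i) (measurable_entry i j)
  have h2 : MeasurableSet {M : Matrix (Fin n) (Fin n) ℝ | ∀ i, M i i = 0} := by
    have : {M : Matrix (Fin n) (Fin n) ℝ | ∀ i, M i i = 0} =
        ⋂ i, (fun M : Matrix (Fin n) (Fin n) ℝ => M i i) ⁻¹' {0} := by
      ext M; simp [Set.mem_iInter]
    rw [this]
    exact MeasurableSet.iInter fun i =>
      (measurable_entry i i) (measurableSet_singleton 0)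
  have h3 : MeasurableSet {M : Matrix (Fin n) (Fin n) ℝ | ∀ i j, M i j = 0 ∨ M i j = 1} := by
    have : {M : Matrix (Fin n) (Fin n) ℝ | ∀ i j, M i j = 0 ∨ M i j = 1} =
        ⋂ i, ⋂ j, (fun M : Matrix (Fin n) (Fin n) ℝ => M i j) ⁻¹' {0, 1} := by
      ext M; simp [Set.mem_iInter]
    rw [this]
    exact MeasurableSet.iInter fun i => MeasurableSet.iInter fun j =>
      (measurable_entry i j) (by measurability)
  have h4 : MeasurableSet {M : Matrix (Fin n) (Fin n) ℝ | ∀ i, (∑ j, M i j) = (d : ℝ)} := by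
    have : {M : Matrix (Fin n) (Fin n) ℝ | ∀ i, (∑ j, M i j) = (d : ℝ)} =
        ⋂ i, (fun M : Matrix (Fin n) (Fin n) ℝ => ∑ j, M i j) ⁻¹' {(d : ℝ)} := by
      ext M; simp [Set.mem_iInter]
    rw [this]
    exact MeasurableSet.iInter fun i =>
      (Finset.measurable_sum _ fun j _ => measurable_entry i j) (measurableSet_singleton _)
  have : RegAdj n d = {M : Matrix (Fin n) (Fin n) ℝ | M.IsSymm} ∩
      {M | ∀ i, M i i = 0} ∩ {M | ∀ i j, M i j = 0 ∨ M i j = 1} ∩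
      {M | ∀ i, (∑ j, M i j) = (d : ℝ)} := by
    ext M
    simp only [RegAdj, Set.mem_inter_iff, Set.mem_setOf_eq]
    tauto
  rw [this]
  exact ((h1.inter h2).inter h3).inter h4

open scoped Classical in
lemma key_bound {n d : ℕ} (hd : 1 ≤ d) {α C₁ C₂ : ℝ} {Ω : Type*} [MeasurableSpace Ω]
    {P : Measure Ω} {A W : Ω → Matrix (Fin n) (Fin n) ℝ} {μ : Measure ℝ}
    (hmod : WRRGModel d α C₁ C₂ P A W μ) (t : ℝ) :
    P {ω | lam1 (Matrix.hadamard (A ω) (W ω)) ≤ t} ≤ (μ (Set.Iic t)) ^ (n / 2) := by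
  obtain ⟨hP, hA, hW, hAreg, _hunif, hWsymm, hWdiag, hWeib, hmarg, hiind, hindep⟩ := hmod
  haveI := hP
  haveI : IsProbabilityMeasure μ := hWeib.1
  set ι := {p : Fin n × Fin n // p.1 < p.2} with hι
  set S : Set (Matrix (Fin n) (Fin n) ℝ × Matrix (Fin n) (Fin n) ℝ) :=
    ⋂ p : ι, {q | q.1 p.1.1 p.1.2 = 1 → q.2 p.1.1 p.1.2 ≤ t} with hSdef
  have hSmeas : MeasurableSet S := by
    refine MeasurableSet.iInter fun p => ?_
    have : {q : Matrix (Fin n) (Fin n) ℝ × Matrix (Fin n) (Fin n) ℝ |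
        q.1 p.1.1 p.1.2 = 1 → q.2 p.1.1 p.1.2 ≤ t} =
        ((fun q : Matrix (Fin n) (Fin n) ℝ × Matrix (Fin n) (Fin n) ℝ =>
          q.1 p.1.1 p.1.2) ⁻¹' {1})ᶜ ∪
        ((fun q : Matrix (Fin n) (Fin n) ℝ × Matrix (Fin n) (Fin n) ℝ =>
          q.2 p.1.1 p.1.2) ⁻¹' Set.Iic t) := by
      ext q
      simp [imp_iff_not_or]
    rw [this]
    exact (((measurable_entry _ _).comp measurable_fst) (measurableSet_singleton 1)).compl.union
      (((measurable_entry _ _).comp measurable_snd) measurableSet_Iic)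
  have hincl : {ω | lam1 (Matrix.hadamard (A ω) (W ω)) ≤ t} ⊆
      (fun ω => (A ω, W ω)) ⁻¹' S := by
    intro ω hω
    simp only [hSdef, Set.mem_preimage, Set.mem_iInter, Set.mem_setOf_eq]
    intro p h1
    exact le_trans (entry_le_lam1_hadamard (hAreg ω) (hWsymm ω) p.2 h1) hω
  have hprodmap : P.map (fun ω => (A ω, W ω)) = (P.map A).prod (P.map W) :=
    (indepFun_iff_map_prod_eq_prod_map_map hA.aemeasurable hW.aemeasurable).1 hindep
  haveI : IsProbabilityMeasure (P.map A) := Measure.isProbabilityMeasure_map hA.aemeasurable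
  haveI : IsProbabilityMeasure (P.map W) := Measure.isProbabilityMeasure_map hW.aemeasurable
  -- pointwise bound for regular M
  have hbound : ∀ M ∈ RegAdj n d,
      (P.map W) (Prod.mk M ⁻¹' S) ≤ (μ (Set.Iic t)) ^ (n / 2) := by
    intro M hM
    set SM : Finset ι := Finset.univ.filter (fun p : ι => M p.1.1 p.1.2 = 1) with hSM
    have hcard : n / 2 ≤ SM.card := by
      have h := card_edges hM hd
      rw [← hSM] at h
      omega
    have hsub : Prod.mk M ⁻¹' S ⊆ ⋂ p ∈ SM, {N : Matrix (Fin n) (Fin n) ℝ |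
        N p.1.1 p.1.2 ≤ t} := by
      intro N hN
      simp only [hSdef, Set.mem_preimage, Set.mem_iInter, Set.mem_setOf_eq] at hN ⊢
      intro p hp
      rw [hSM, Finset.mem_filter] at hp
      exact hN p hp.2
    have hWp : ∀ p : ι, Measurable (fun ω => W ω p.1.1 p.1.2) :=
      fun p => (measurable_entry _ _).comp hW
    have hNset : ∀ p : ι, MeasurableSet {N : Matrix (Fin n) (Fin n) ℝ |
        N p.1.1 p.1.2 ≤ t} := fun p => (measurable_entry _ _) measurableSet_Iic
    calc (P.map W) (Prod.mk M ⁻¹' S)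
        ≤ (P.map W) (⋂ p ∈ SM, {N : Matrix (Fin n) (Fin n) ℝ | N p.1.1 p.1.2 ≤ t}) :=
          measure_mono hsub
      _ = P (W ⁻¹' ⋂ p ∈ SM, {N : Matrix (Fin n) (Fin n) ℝ | N p.1.1 p.1.2 ≤ t}) := by
          rw [Measure.map_apply hW]
          exact MeasurableSet.biInter SM.countable_toSet fun p _ => hNset p
      _ = P (⋂ p ∈ SM, (fun ω => W ω p.1.1 p.1.2) ⁻¹' Set.Iic t) := by
          congr 1
          ext ω
          simp [Set.mem_iInter, Set.mem_preimage]
      _ = ∏ p ∈ SM, P ((fun ω => W ω p.1.1 p.1.2) ⁻¹' Set.Iic t) := by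
          exact hiind.measure_inter_preimage_eq_mul SM
            (fun p _ => measurableSet_Iic)
      _ = ∏ p ∈ SM, μ (Set.Iic t) := by
          refine Finset.prod_congr rfl fun p _ => ?_
          rw [← Measure.map_apply (hWp p) measurableSet_Iic, hmarg p.1.1 p.1.2 p.2]
      _ = (μ (Set.Iic t)) ^ SM.card := by rw [Finset.prod_const]
      _ ≤ (μ (Set.Iic t)) ^ (n / 2) :=
          pow_le_pow_right_of_le_one' prob_le_one hcard
  have hae : ∀ᵐ M ∂(P.map A), M ∈ RegAdj n d := by
    refine mem_ae_iff.2 ?_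
    have hset : {x : Matrix (Fin n) (Fin n) ℝ | (fun M => M ∈ RegAdj n d) x}ᶜ =
        (RegAdj n d)ᶜ := rfl
    rw [hset, Measure.map_apply hA measurableSet_RegAdj.compl]
    have : A ⁻¹' (RegAdj n d)ᶜ = ∅ := by
      ext ω; simp [hAreg ω]
    rw [this]; exact measure_empty
  calc P {ω | lam1 (Matrix.hadamard (A ω) (W ω)) ≤ t}
      ≤ P ((fun ω => (A ω, W ω)) ⁻¹' S) := measure_mono hincl
    _ = (P.map (fun ω => (A ω, W ω))) S := by
        rw [Measure.map_apply (hA.prodMk hW) hSmeas]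
    _ = ((P.map A).prod (P.map W)) S := by rw [hprodmap]
    _ = ∫⁻ M, (P.map W) (Prod.mk M ⁻¹' S) ∂(P.map A) := Measure.prod_apply hSmeas
    _ ≤ ∫⁻ _, (μ (Set.Iic t)) ^ (n / 2) ∂(P.map A) :=
        lintegral_mono_ae (hae.mono fun M hM => hbound M hM)
    _ = (μ (Set.Iic t)) ^ (n / 2) := by simp

/-- **Refined lower tail fluctuation bound for heavy tails `0 < α ≤ 2`.** -/
theorem largest_eigenvalue_refined_lower_tail
    (d : ℕ) (hd : 3 ≤ d) (α : ℝ) (hα : 0 < α) (hα2 : α ≤ 2)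
    (C₁ C₂ : ℝ) (hC₁ : 0 < C₁) (hC₂ : 0 < C₂)
    (Ω : ℕ → Type*) [∀ n, MeasurableSpace (Ω n)]
    (P : ∀ n, Measure (Ω n))
    (A W : ∀ n, Ω n → Matrix (Fin n) (Fin n) ℝ)
    (μ : ℕ → Measure ℝ)
    (hmodel : ∀ n, d < n → Even (n * d) →
      WRRGModel d α C₁ C₂ (P n) (A n) (W n) (μ n)) :
    ∀ τ : ℝ, max 0 (1 - α) < τ → τ < 1 →
      Tendsto
        (fun n => P n {ω | lam1 (Matrix.hadamard (A n ω) (W n ω)) ≤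
          Real.log n ^ (1 / α) - Real.log n ^ (τ / α)})
        (atTop ⊓ 𝓟 {n : ℕ | d < n ∧ Even (n * d)}) (nhds 0) := by
  intro τ hτ1 hτ2
  have hτα : 1 - α < τ := lt_of_le_of_lt (le_max_right _ _) hτ1
  set β : ℝ := (α + τ - 1) / α with hβdef
  have hβ : 0 < β := div_pos (by linarith) hα
  -- the dominating sequence
  have hg0 : Tendsto (fun n : ℕ =>
      ENNReal.ofReal (Real.exp (-(C₁/6 * Real.exp (α/4 * Real.log n ^ β)))))
      atTop (nhds 0) := by
    have h1 : Tendsto (fun n : ℕ => Real.log n) atTop atTop :=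
      Real.tendsto_log_atTop.comp tendsto_natCast_atTop_atTop
    have h2 : Tendsto (fun n : ℕ => Real.log n ^ β) atTop atTop :=
      (tendsto_rpow_atTop hβ).comp h1
    have h3 : Tendsto (fun n : ℕ => α/4 * Real.log n ^ β) atTop atTop :=
      h2.const_mul_atTop (by positivity)
    have h4 : Tendsto (fun n : ℕ => C₁/6 * Real.exp (α/4 * Real.log n ^ β)) atTop atTop :=
      (Real.tendsto_exp_atTop.comp h3).const_mul_atTop (by positivity)
    have h5 : Tendsto (fun n : ℕ =>
        Real.exp (-(C₁/6 * Real.exp (α/4 * Real.log n ^ β)))) atTop (nhds 0) :=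
      Real.tendsto_exp_atBot.comp (tendsto_neg_atTop_atBot.comp h4)
    have h6 := ENNReal.tendsto_ofReal h5
    simpa using h6
  have hev : ∀ᶠ n : ℕ in atTop ⊓ 𝓟 {n : ℕ | d < n ∧ Even (n * d)},
      P n {ω | lam1 (Matrix.hadamard (A n ω) (W n ω)) ≤
          Real.log n ^ (1 / α) - Real.log n ^ (τ / α)} ≤
      ENNReal.ofReal (Real.exp (-(C₁/6 * Real.exp (α/4 * Real.log n ^ β)))) := by
    rw [eventually_inf_principal]
    have h1 : Tendsto (fun n : ℕ => Real.log n) atTop atTop :=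
      Real.tendsto_log_atTop.comp tendsto_natCast_atTop_atTop
    have hc1 : ∀ᶠ n : ℕ in atTop, 1 ≤ Real.log n := h1.eventually_ge_atTop 1
    have hc2 : ∀ᶠ n : ℕ in atTop, 2 ≤ Real.log n ^ (1/α) :=
      ((tendsto_rpow_atTop (by positivity : 0 < 1/α)).comp h1).eventually_ge_atTop 2
    filter_upwards [hc1, hc2] with n hL1 hL2 hn
    obtain ⟨hdn, heven⟩ := hn
    have hmod := hmodel n hdn heven
    have hWeib : IsWeibull α C₁ C₂ (μ n) := hmod.2.2.2.2.2.2.2.1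
    haveI : IsProbabilityMeasure (μ n) := hWeib.1
    set L : ℝ := Real.log n with hLdef
    set t : ℝ := L ^ (1/α) - L ^ (τ/α) with htdef
    set u : ℝ := L ^ (1/α) - L ^ (τ/α) / 2 with hudef
    have hkey := key_bound (by omega : 1 ≤ d) hmod t
    have hLpos : (0:ℝ) < L := by linarith
    have hταpos : 0 < L ^ (τ/α) := Real.rpow_pos_of_pos hLpos _
    have htu : t < u := by rw [htdef, hudef]; linarith
    have hdiv : τ/α ≤ 1/α := (div_le_div_iff_of_pos_right hα).2 hτ2.le
    have hτle : L ^ (τ/α) ≤ L ^ (1/α) :=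
      Real.rpow_le_rpow_of_exponent_le hL1 hdiv
    have hu1 : 1 ≤ u := by rw [hudef]; linarith
    have hupow : u ^ α ≤ L - α/4 * L ^ β := by
      rw [hudef, hβdef]
      exact rpow_upper_bound hα hα2 hτ2 hL1
    have hweib := (hWeib.2 u hu1).1
    have hnpos : (0:ℝ) < n := by
      have : 0 < n := by omega
      exact_mod_cast this
    have hexp : Real.exp (α/4 * L ^ β) * (n:ℝ)⁻¹ ≤ Real.exp (-u ^ α) := by
      have h1 : α/4 * L ^ β - L ≤ -u ^ α := by linarith
      calc Real.exp (α/4 * L ^ β) * (n:ℝ)⁻¹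
          = Real.exp (α/4 * L ^ β) * Real.exp (-L) := by
            rw [Real.exp_neg, hLdef, Real.exp_log hnpos]
        _ = Real.exp (α/4 * L ^ β - L) := by rw [← Real.exp_add]; ring_nf
        _ ≤ Real.exp (-u ^ α) := Real.exp_le_exp.2 h1
    set E : ℝ := Real.exp (α/4 * L ^ β) with hEdef
    have hEpos : 0 < E := Real.exp_pos _
    set c : ℝ := C₁ * (E * (n:ℝ)⁻¹) / 2 with hcdef
    have hcpos : 0 < c := by positivity
    have hcle : ENNReal.ofReal c ≤ μ n {x | u ≤ x} := by
      refine le_trans (ENNReal.ofReal_le_ofReal ?_) hweib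
      rw [hcdef]
      have := mul_le_mul_of_nonneg_left hexp hC₁.le
      linarith
    have hrR : c ≤ (μ n {x | u ≤ x}).toReal :=
      (ENNReal.ofReal_le_iff_le_toReal (measure_ne_top _ _)).1 hcle
    have hr1 : (μ n {x | u ≤ x}).toReal ≤ 1 := by
      rw [← ENNReal.toReal_one]
      exact ENNReal.toReal_mono (by simp) prob_le_one
    have hc1' : c ≤ 1 := hrR.trans hr1
    have hdisj : Disjoint (Set.Iic t) {x | u ≤ x} := by
      rw [Set.disjoint_left]
      intro x hx hx2
      simp only [Set.mem_Iic, Set.mem_setOf_eq] at hx hx2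
      linarith
    have hsum : μ n (Set.Iic t) + μ n {x | u ≤ x} ≤ 1 := by
      rw [← measure_union hdisj measurableSet_Ici]
      exact prob_le_one
    have hsumR : (μ n (Set.Iic t)).toReal + (μ n {x | u ≤ x}).toReal ≤ 1 := by
      rw [← ENNReal.toReal_add (measure_ne_top _ _) (measure_ne_top _ _),
        ← ENNReal.toReal_one]
      exact ENNReal.toReal_mono (by simp) hsum
    have hqR : (μ n (Set.Iic t)).toReal ≤ 1 - c := by linarith
    -- final chain
    have hmn : (n:ℝ) ≤ 2 * (n / 2 : ℕ) + 1 := by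
      have : n ≤ 2 * (n / 2) + 1 := by omega
      exact_mod_cast this
    have hn4 : (4:ℝ) ≤ n := by
      have : 4 ≤ n := by omega
      exact_mod_cast this
    have hm3 : (n:ℝ)/3 ≤ ((n / 2 : ℕ) : ℝ) := by linarith
    have hmc : C₁/6 * E ≤ ((n / 2 : ℕ) : ℝ) * c := by
      have h1 : (n:ℝ)/3 * c ≤ ((n / 2 : ℕ) : ℝ) * c :=
        mul_le_mul_of_nonneg_right hm3 hcpos.le
      have h2 : (n:ℝ)/3 * c = C₁/6 * E * ((n:ℝ) * (n:ℝ)⁻¹) := by rw [hcdef]; ring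
      rw [mul_inv_cancel₀ hnpos.ne', mul_one] at h2
      linarith
    have hq_pow : (μ n (Set.Iic t)) ^ (n / 2) ≤
        ENNReal.ofReal (Real.exp (-(C₁/6 * E))) := by
      have hq_eq : μ n (Set.Iic t) = ENNReal.ofReal (μ n (Set.Iic t)).toReal :=
        (ENNReal.ofReal_toReal (measure_ne_top _ _)).symm
      rw [hq_eq, ← ENNReal.ofReal_pow ENNReal.toReal_nonneg]
      apply ENNReal.ofReal_le_ofReal
      calc (μ n (Set.Iic t)).toReal ^ (n / 2)
          ≤ (1 - c) ^ (n / 2) := pow_le_pow_left₀ ENNReal.toReal_nonneg hqR _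
        _ ≤ Real.exp (-c) ^ (n / 2) := by
            apply pow_le_pow_left₀ (by linarith)
            linarith [Real.add_one_le_exp (-c)]
        _ = Real.exp (-(((n / 2 : ℕ) : ℝ) * c)) := by
            rw [← Real.exp_nat_mul]; ring_nf
        _ ≤ Real.exp (-(C₁/6 * E)) := Real.exp_le_exp.2 (by linarith)
    exact hkey.trans hq_pow
  refine tendsto_of_tendsto_of_tendsto_of_le_of_le'
    (tendsto_const_nhds) (hg0.mono_left inf_le_left)
    (Eventually.of_forall fun n => zero_le) hev
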